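/- Let d ≥ 1, ρ > 0, and let μ be a probability measure on ℝ^d whose support S is bounded with diameter D > 0 and satisfies μ(B(x,ε)) ≥ ρ ε^d for all x ∈ S and all ε ∈ (0, D], where B(x,ε) is the closed Euclidean ball of center x and radius ε. Let X_1, …, X_N be i.i.d. with law μ, and for x ∈ S and i ∈ {1, …, N}, let D_{(i)}(x) denote the distance from x to its i-th nearest neighbor among X_1, …, X_N. Then E[D_{(i)}(x)] ≤ 2 (i / (ρ(N+1)))^{1/d}. -/

import Mathlib

open MeasureTheory ProbabilityTheory

section NNDAux

open MeasureTheory ProbabilityTheory intervalIntegral Finset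


lemma nnd_beta (a b : ℕ) :
    ∫ x in (0:ℝ)..1, x ^ a * (1 - x) ^ b
      = (a.factorial * b.factorial : ℝ) / (a + b + 1).factorial := by
  induction b generalizing a with
  | zero =>
    simp only [pow_zero, mul_one, integral_pow]
    simp [Nat.factorial_succ]
    rw [eq_div_iff (by positivity)]
    field_simp
  | succ b ih =>
    have hu : ∀ x ∈ Set.uIcc (0:ℝ) 1, HasDerivAt (fun x : ℝ => (1 - x) ^ (b+1))
        (-( (b+1:ℝ) * (1 - x) ^ b)) x := by
      intro x _
      have h1 : HasDerivAt (fun x : ℝ => 1 - x) (-1) x := by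
        simpa using (hasDerivAt_id x).const_sub 1
      have := (hasDerivAt_pow (b+1) (1 - x)).comp x h1
      refine this.congr_deriv ?_
      push_cast; ring
    have hv : ∀ x ∈ Set.uIcc (0:ℝ) 1, HasDerivAt (fun x : ℝ => x ^ (a+1) / (a+1)) ((x:ℝ) ^ a) x := by
      intro x _
      have := (hasDerivAt_pow (a+1) x).div_const (a+1)
      refine this.congr_deriv ?_
      field_simp
      simp
    have hiu : IntervalIntegrable (fun x : ℝ => -((b+1:ℝ) * (1 - x) ^ b)) volume 0 1 := by
      apply Continuous.intervalIntegrable; continuity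
    have hiv : IntervalIntegrable (fun x : ℝ => (x:ℝ) ^ a) volume 0 1 := by
      apply Continuous.intervalIntegrable; continuity
    have key := integral_mul_deriv_eq_deriv_mul hu hv hiu hiv
    have h2 : ∫ x in (0:ℝ)..1, (1 - x) ^ (b+1) * x ^ a
        = (b+1:ℝ)/(a+1) * ∫ x in (0:ℝ)..1, x ^ (a+1) * (1 - x) ^ b := by
      rw [key, ← intervalIntegral.integral_const_mul]
      rw [show ((1:ℝ) - 1) ^ (b+1) * (1 ^ (a+1) / (a+1)) - (1 - (0:ℝ)) ^ (b+1) * (0 ^ (a+1) / (a+1)) = 0 by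
        simp [zero_pow (Nat.succ_ne_zero a)]]
      rw [zero_sub, ← intervalIntegral.integral_neg]
      congr 1
      ext x
      field_simp
    have h3 : ∫ x in (0:ℝ)..1, x ^ a * (1 - x) ^ (b+1)
        = (b+1:ℝ)/(a+1) * ∫ x in (0:ℝ)..1, x ^ (a+1) * (1 - x) ^ b := by
      rw [← h2]; congr 1; ext x; ring
    rw [h3, ih (a+1)]
    have hfa : ((a+1).factorial : ℝ) = (a+1) * a.factorial := by
      rw [Nat.factorial_succ]; push_cast; ring
    have hfb : ((b+1).factorial : ℝ) = (b+1) * b.factorial := by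
      rw [Nat.factorial_succ]; push_cast; ring
    have he : (a + 1 + b + 1) = (a + (b+1) + 1) := by omega
    rw [he, hfa, hfb]
    have h0 : ((a + (b+1) + 1).factorial : ℝ) ≠ 0 := by
      exact_mod_cast Nat.factorial_ne_zero _
    field_simp

/-- partial binomial CDF polynomial -/
noncomputable def nndF (n m : ℕ) (p : ℝ) : ℝ :=
  ∑ j ∈ range (m+1), (n.choose j : ℝ) * p ^ j * (1 - p) ^ (n - j)

lemma nndF_nonneg {n m : ℕ} {p : ℝ} (h0 : 0 ≤ p) (h1 : p ≤ 1) : 0 ≤ nndF n m p := by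
  apply Finset.sum_nonneg
  intro j _
  have : (0:ℝ) ≤ 1 - p := by linarith
  positivity

lemma nndF_hasDerivAt {n m : ℕ} (h : m < n) (p : ℝ) :
    HasDerivAt (nndF n m)
      (-((n * ((n-1).choose m) : ℕ) * p ^ m * (1 - p) ^ (n - 1 - m))) p := by
  induction m with
  | zero =>
    have h1 : HasDerivAt (fun p : ℝ => 1 - p) (-1) p := by
      simpa using (hasDerivAt_id p).const_sub 1
    have h2 := (hasDerivAt_pow n (1 - p)).comp p h1
    have h3 : HasDerivAt (nndF n 0) ((n:ℝ) * (1-p)^(n-1) * (-1)) p := by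
      apply HasDerivAt.congr_deriv (h2.congr_of_eventuallyEq ?_) rfl
      filter_upwards with q
      simp [nndF]
    convert h3 using 1
    simp
  | succ m ih =>
    have hm : m < n := by omega
    have IH := ih hm
    -- derivative of the new term
    have hterm : HasDerivAt (fun p : ℝ => (n.choose (m+1) : ℝ) * p ^ (m+1) * (1 - p) ^ (n - (m+1)))
        ((n.choose (m+1) : ℝ) * ((m+1) * p ^ m * (1-p)^(n-(m+1))
          - (n - (m+1) : ℕ) * p^(m+1) * (1-p)^(n-(m+1)-1))) p := by
      have h1 : HasDerivAt (fun p : ℝ => 1 - p) (-1) p := by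
        simpa using (hasDerivAt_id p).const_sub 1
      have h2 : HasDerivAt (fun p : ℝ => (1 - p) ^ (n - (m+1)))
          (-((n - (m+1) : ℕ) * (1-p) ^ (n - (m+1) - 1))) p := by
        have := (hasDerivAt_pow (n - (m+1)) (1 - p)).comp p h1
        refine this.congr_deriv ?_
        ring
      have h3 : HasDerivAt (fun p : ℝ => p ^ (m+1)) ((m+1 : ℕ) * p ^ m) p := by
        simpa using hasDerivAt_pow (m+1) p
      have key := ((h3.mul h2).const_mul ((n.choose (m+1) : ℝ)))
      have hfe : (fun y : ℝ => (n.choose (m+1) : ℝ) * (y^(m+1)*(1-y)^(n-(m+1))))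
          = (fun p : ℝ => (n.choose (m+1) : ℝ) * p^(m+1)*(1-p)^(n-(m+1))) := by
        funext y; ring
      simp only [Pi.mul_apply] at key
      rw [hfe] at key
      refine key.congr_deriv ?_
      push_cast
      ring
    have hsum : HasDerivAt (nndF n (m+1))
        (-((n * ((n-1).choose m) : ℕ) * p ^ m * (1 - p) ^ (n - 1 - m))
          + (n.choose (m+1) : ℝ) * ((m+1) * p ^ m * (1-p)^(n-(m+1))
          - ((n - (m+1) : ℕ)) * p^(m+1) * (1-p)^(n-(m+1)-1))) p := by
      have : nndF n (m+1) = fun p => nndF n m p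
          + (n.choose (m+1) : ℝ) * p ^ (m+1) * (1 - p) ^ (n - (m+1)) := by
        funext q
        simp [nndF, Finset.sum_range_succ]
      rw [this]
      exact IH.add hterm
    convert hsum using 1
    -- identity juggling
    have e1 : (n.choose (m+1)) * (m+1) = n * ((n-1).choose m) := by
      have h5 := Nat.add_one_mul_choose_eq (n-1) m
      have hn : n - 1 + 1 = n := by omega
      simp only [Nat.succ_eq_add_one, hn] at h5
      linarith
    have e2 : (n.choose (m+1)) * (n - (m+1)) = n * ((n-1).choose (m+1)) := by
      have h4 := Nat.choose_succ_right_eq n (m+1)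
      have h5 := Nat.add_one_mul_choose_eq (n-1) (m+1)
      have hn : n - 1 + 1 = n := by omega
      simp only [Nat.succ_eq_add_one, hn] at h5
      linarith
    have hc1 : n - (m+1) = n - 1 - m := by omega
    have hc2 : n - (m+1) - 1 = n - 1 - (m+1) := by omega
    rw [hc2, hc1]
    have e1' : ((n.choose (m+1)) : ℝ) * ((m+1 : ℕ) : ℝ) = ((n * ((n-1).choose m) : ℕ) : ℝ) := by
      exact_mod_cast congrArg (Nat.cast : ℕ → ℝ) e1
    have e2' : ((n.choose (m+1)) : ℝ) * (((n - 1 - m : ℕ)) : ℝ)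
        = ((n * ((n-1).choose (m+1)) : ℕ) : ℝ) := by
      rw [← hc1]
      exact_mod_cast congrArg (Nat.cast : ℕ → ℝ) e2
    push_cast at e1' e2' ⊢
    linear_combination (p^(m+1) * (1-p)^(n-1-(m+1))) * e2' - (p^m * (1-p)^(n-1-m)) * e1'

lemma nndF_continuous (n m : ℕ) : Continuous (nndF n m) := by
  unfold nndF
  exact continuous_finset_sum _ (fun j _ => by continuity)

lemma nndF_antitoneOn {n m : ℕ} (h : m < n) : AntitoneOn (nndF n m) (Set.Icc 0 1) := by
  apply antitoneOn_of_deriv_nonpos (convex_Icc 0 1) (nndF_continuous n m).continuousOn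
  · intro x _
    exact ((nndF_hasDerivAt h x).differentiableAt).differentiableWithinAt
  · intro x hx
    rw [interior_Icc] at hx
    rw [(nndF_hasDerivAt h x).deriv]
    have h1 : (0:ℝ) ≤ x := le_of_lt hx.1
    have h2 : (0:ℝ) ≤ 1 - x := by linarith [hx.2]
    have : (0:ℝ) ≤ ((n * ((n-1).choose m) : ℕ) : ℝ) * x ^ m * (1 - x) ^ (n - 1 - m) := by
      positivity
    linarith

lemma nndF_integral {n m : ℕ} (h : m < n) :
    ∫ x in (0:ℝ)..1, nndF n m x = ((m:ℝ)+1)/((n:ℝ)+1) := by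
  unfold nndF
  rw [intervalIntegral.integral_finset_sum]
  · have hterm : ∀ j ∈ range (m+1),
        ∫ x in (0:ℝ)..1, (n.choose j : ℝ) * x ^ j * (1 - x) ^ (n - j) = 1/((n:ℝ)+1) := by
      intro j hj
      have hjn : j ≤ n := by
        have := Finset.mem_range.mp hj; omega
      have : ∫ x in (0:ℝ)..1, (n.choose j : ℝ) * x ^ j * (1 - x) ^ (n - j)
          = (n.choose j : ℝ) * ∫ x in (0:ℝ)..1, x ^ j * (1 - x) ^ (n - j) := by
        rw [← intervalIntegral.integral_const_mul]
        congr 1; ext x; ring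
      rw [this, nnd_beta]
      have he : j + (n - j) + 1 = n + 1 := by omega
      rw [he]
      have hch : (n.choose j) * (j.factorial * (n-j).factorial) = n.factorial := by
        have := Nat.choose_mul_factorial_mul_factorial hjn
        linarith [this]
      have hch' : ((n.choose j) : ℝ) * ((j.factorial : ℝ) * ((n-j).factorial : ℝ))
          = (n.factorial : ℝ) := by exact_mod_cast congrArg (Nat.cast : ℕ → ℝ) hch
      have hf1 : ((n+1).factorial : ℝ) = ((n:ℝ)+1) * (n.factorial : ℝ) := by
        rw [Nat.factorial_succ]; push_cast; ring
      rw [hf1]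
      have h0 : (n.factorial : ℝ) ≠ 0 := by exact_mod_cast Nat.factorial_ne_zero n
      have h1 : ((n:ℝ)+1) ≠ 0 := by positivity
      field_simp
      linear_combination hch'
    rw [Finset.sum_congr rfl hterm]
    simp [Finset.sum_const, Finset.card_range]
    ring
  · intro j _
    apply Continuous.intervalIntegrable
    continuity


lemma nnd_sort_gt_iff_count {n : ℕ} (f : Fin n → ℝ) (i : Fin n) (t : ℝ) :
    t < f (Tuple.sort f i) ↔ (univ.filter (fun j => f j ≤ t)).card ≤ i.1 := by
  set σ := Tuple.sort f with hσ
  have hmono : Monotone (f ∘ σ) := Tuple.monotone_sort f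
  have hcard : (univ.filter (fun j => f j ≤ t)).card
      = (univ.filter (fun j => f (σ j) ≤ t)).card := by
    have himg : univ.filter (fun j => f j ≤ t)
        = (univ.filter (fun j => f (σ j) ≤ t)).image σ := by
      ext k
      simp only [Finset.mem_filter, Finset.mem_univ, true_and, Finset.mem_image]
      constructor
      · intro hk
        exact ⟨σ⁻¹ k, by simpa using hk, by simp⟩
      · rintro ⟨a, ha, rfl⟩
        exact ha
    rw [himg, Finset.card_image_of_injective _ (Equiv.injective σ)]
  rw [hcard]
  constructor
  · intro ht
    have hsub : univ.filter (fun j => f (σ j) ≤ t) ⊆ Finset.Iio i := by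
      intro j hj
      rw [Finset.mem_filter] at hj
      rw [Finset.mem_Iio]
      by_contra hij
      push_neg at hij
      exact absurd (lt_of_lt_of_le ht (hmono hij)) (not_lt.mpr hj.2)
    have := Finset.card_le_card hsub
    rwa [Fin.card_Iio] at this
  · intro hc
    by_contra ht
    push_neg at ht
    have hsub : Finset.Iic i ⊆ univ.filter (fun j => f (σ j) ≤ t) := by
      intro j hj
      rw [Finset.mem_Iic] at hj
      rw [Finset.mem_filter]
      exact ⟨Finset.mem_univ _, le_trans (hmono hj) ht⟩
    have := Finset.card_le_card hsub
    rw [Fin.card_Iic] at this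
    omega


variable {Ω : Type*} [MeasureSpace Ω] [IsProbabilityMeasure (ℙ : Measure Ω)]
  {E : Type*} [MeasurableSpace E]

lemma nnd_count_prob (n : ℕ) (X : Fin n → Ω → E) (hX : ∀ j, Measurable (X j))
    (hindep : iIndepFun X ℙ)
    (C : Set E) (hC : MeasurableSet C) [∀ (j : Fin n) (ω : Ω), Decidable (X j ω ∈ C)]
    (P : ENNReal)
    (hlaw : ∀ j, ℙ (X j ⁻¹' C) = P) (m : ℕ) :
    ℙ {ω | (univ.filter (fun j => X j ω ∈ C)).card ≤ m}
      = ∑ j ∈ range (m+1), (n.choose j : ENNReal) * P ^ j * (1 - P) ^ (n - j) := by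
  classical
  set Q : ENNReal := 1 - P with hQ
  -- the elementary events
  set ET : Finset (Fin n) → Set Ω := fun T => {ω | univ.filter (fun j => X j ω ∈ C) = T}
    with hET
  have hETeq : ∀ T : Finset (Fin n),
      ET T = ⋂ j, X j ⁻¹' (if j ∈ T then C else Cᶜ) := by
    intro T
    ext ω
    simp only [hET, Set.mem_setOf_eq, Set.mem_iInter, Set.mem_preimage, Finset.ext_iff,
      Finset.mem_filter, Finset.mem_univ, true_and]
    constructor
    · intro h j
      by_cases hj : j ∈ T
      · simpa [hj] using (h j).mpr hj
      · simp only [if_neg hj]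
        exact fun hc => hj ((h j).mp hc)
    · intro h j
      by_cases hj : j ∈ T
      · have := h j; rw [if_pos hj] at this; exact ⟨fun _ => hj, fun _ => this⟩
      · have := h j; rw [if_neg hj] at this
        exact ⟨fun hc => absurd hc this, fun hjT => absurd hjT hj⟩
  have hETmeas : ∀ T : Finset (Fin n), MeasurableSet (ET T) := by
    intro T
    rw [hETeq]
    exact MeasurableSet.iInter fun j => (hX j) (by split <;> [exact hC; exact hC.compl])
  have hETprob : ∀ T : Finset (Fin n), ℙ (ET T) = P ^ T.card * Q ^ (n - T.card) := by
    intro T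
    rw [hETeq]
    have hmi := hindep.meas_iInter (s := fun j => X j ⁻¹' (if j ∈ T then C else Cᶜ))
      (fun j => ⟨if j ∈ T then C else Cᶜ, by split <;> [exact hC; exact hC.compl], rfl⟩)
    rw [hmi]
    have hfac : ∀ j : Fin n, ℙ (X j ⁻¹' (if j ∈ T then C else Cᶜ))
        = if j ∈ T then P else Q := by
      intro j
      by_cases hj : j ∈ T
      · simp [hj, hlaw j]
      · simp only [hj, if_false]
        rw [Set.preimage_compl, measure_compl ((hX j) hC) (measure_ne_top _ _), hlaw j,
          measure_univ]
    rw [Finset.prod_congr rfl (fun j _ => hfac j)]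
    have h1 : univ.filter (fun j : Fin n => j ∈ T) = T := by ext j; simp
    have h2 : (univ.filter (fun j : Fin n => ¬ j ∈ T)).card = n - T.card := by
      have hc2 : univ.filter (fun j : Fin n => ¬ j ∈ T) = Tᶜ := by ext j; simp
      rw [hc2, Finset.card_compl, Fintype.card_fin]
    rw [Finset.prod_ite, Finset.prod_const, Finset.prod_const, h1, h2]
  -- decompose the event
  have hunion : {ω | (univ.filter (fun j => X j ω ∈ C)).card ≤ m}
      = ⋃ T ∈ (univ : Finset (Fin n)).powerset.filter (fun T => T.card ≤ m), ET T := by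
    ext ω
    simp only [Set.mem_setOf_eq, Set.mem_iUnion, Finset.mem_filter, Finset.mem_powerset,
      hET, exists_prop]
    constructor
    · intro h
      exact ⟨univ.filter (fun j => X j ω ∈ C), ⟨Finset.filter_subset _ _, h⟩, rfl⟩
    · rintro ⟨T, ⟨-, hT⟩, rfl⟩
      exact hT
  have hdisj : Set.PairwiseDisjoint
      ↑((univ : Finset (Fin n)).powerset.filter (fun T => T.card ≤ m)) ET := by
    intro T₁ _ T₂ _ hne
    apply Set.disjoint_left.mpr
    intro ω h1 h2
    exact hne (h1.symm.trans h2)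
  rw [hunion, measure_biUnion_finset hdisj (fun T _ => hETmeas T)]
  rw [Finset.sum_congr rfl (fun T _ => hETprob T)]
  -- group by cardinality
  have hgroup : (univ : Finset (Fin n)).powerset.filter (fun T => T.card ≤ m)
      = (Finset.range (m+1)).biUnion (fun j => Finset.powersetCard j (univ : Finset (Fin n))) := by
    ext T
    simp only [Finset.mem_filter, Finset.mem_powerset, Finset.mem_biUnion, Finset.mem_range,
      Finset.mem_powersetCard]
    constructor
    · intro ⟨hsub, hcard⟩
      exact ⟨T.card, by omega, hsub, rfl⟩
    · rintro ⟨j, hj, hsub, rfl⟩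
      exact ⟨hsub, by omega⟩
  rw [hgroup, Finset.sum_biUnion]
  · apply Finset.sum_congr rfl
    intro j hj
    have : ∀ T ∈ Finset.powersetCard j (univ : Finset (Fin n)),
        P ^ T.card * Q ^ (n - T.card) = P ^ j * Q ^ (n - j) := by
      intro T hT
      rw [(Finset.mem_powersetCard.mp hT).2]
    rw [Finset.sum_congr rfl this, Finset.sum_const, Finset.card_powersetCard,
      Finset.card_univ, Fintype.card_fin, nsmul_eq_mul, mul_assoc]
  · intro j₁ _ j₂ _ hne
    apply Finset.disjoint_left.mpr
    intro T h1 h2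
    rw [Finset.mem_powersetCard] at h1 h2
    exact hne (h1.2.symm.trans h2.2)


end NNDAux

section Main

open Finset

/-- Lemma 3.1 of the paper: expected distance to the `(i+1)`-th
nearest neighbor (1-based index `i+1`).  The set `S` is the support of `μ`:
it is closed, carries all the mass, is bounded with diameter `D`, and
`μ(B(x,ε)) ≥ ρ ε^d` for every `x ∈ S` and `ε ∈ (0,D]`.  The `(i+1)`-th nearest
neighbor distance from `x` is the `(i+1)`-th order statistic of the distances
`‖X j - x‖`, obtained through the sorting permutation `Tuple.sort`. -/
theorem expected_nearest_neighbor_distance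
    {Ω : Type*} [MeasureSpace Ω] [IsProbabilityMeasure (ℙ : Measure Ω)]
    (d N : ℕ) (hd : 1 ≤ d) (hN : 1 ≤ N)
    (ρ D : ℝ) (hρ : 0 < ρ) (hD : 0 < D)
    (μ : Measure (EuclideanSpace ℝ (Fin d))) [IsProbabilityMeasure μ]
    (S : Set (EuclideanSpace ℝ (Fin d)))
    (hSclosed : IsClosed S) (hSfull : μ Sᶜ = 0)
    (hSbdd : Bornology.IsBounded S) (hdiam : Metric.diam S = D)
    (hmass : ∀ x ∈ S, ∀ ε : ℝ, 0 < ε → ε ≤ D →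
      ENNReal.ofReal (ρ * ε ^ d) ≤ μ (Metric.closedBall x ε))
    (X : Fin N → Ω → EuclideanSpace ℝ (Fin d)) (hX : ∀ i, Measurable (X i))
    (hindep : iIndepFun X ℙ)
    (hlaw : ∀ i, Measure.map (X i) ℙ = μ)
    (x : EuclideanSpace ℝ (Fin d)) (hx : x ∈ S) (i : Fin N) :
    ∫ ω, ‖X (Tuple.sort (fun j => ‖X j ω - x‖) i) ω - x‖ ∂ℙ ≤
      2 * (((i.1 : ℝ) + 1) / (ρ * ((N : ℝ) + 1))) ^ ((1 : ℝ) / d) := by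
  classical
  set Y : Ω → ℝ := fun ω => ‖X (Tuple.sort (fun j => ‖X j ω - x‖) i) ω - x‖ with hY
  have hYnn : ∀ ω, 0 ≤ Y ω := fun ω => norm_nonneg _
  set M : ℝ := ((i.1 : ℝ) + 1) / (ρ * ((N : ℝ) + 1)) with hM
  have hMpos : 0 < M := by
    apply div_pos (by positivity)
    positivity
  -- event identity
  have hev : ∀ t : ℝ, {ω | t < Y ω}
      = {ω | (univ.filter (fun j => X j ω ∈ Metric.closedBall x t)).card ≤ i.1} := by
    intro t
    ext ω
    simp only [Set.mem_setOf_eq, hY]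
    rw [nnd_sort_gt_iff_count (fun j => ‖X j ω - x‖) i t]
    have : univ.filter (fun j => ‖X j ω - x‖ ≤ t)
        = univ.filter (fun j => X j ω ∈ Metric.closedBall x t) := by
      apply Finset.filter_congr
      intro j _
      simp [Metric.mem_closedBall, dist_eq_norm]
    rw [this]
  -- measurability of the counting events
  have hcnt : ∀ t : ℝ, MeasurableSet
      {ω | (univ.filter (fun j => X j ω ∈ Metric.closedBall x t)).card ≤ i.1} := by
    intro t
    have hc : Measurable (fun ω => (univ.filter
        (fun j => X j ω ∈ Metric.closedBall x t)).card) := by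
      simp only [Finset.card_filter]
      apply Finset.measurable_sum
      intro j _
      exact Measurable.ite ((hX j) measurableSet_closedBall) measurable_const measurable_const
    exact hc measurableSet_Iic
  have hYmeas : Measurable Y := by
    apply measurable_of_Ioi
    intro t
    have : Y ⁻¹' Set.Ioi t = {ω | t < Y ω} := rfl
    rw [this, hev t]
    exact hcnt t
  -- law of the indicator events
  have hPlaw : ∀ t : ℝ, ∀ j : Fin N,
      ℙ (X j ⁻¹' Metric.closedBall x t) = μ (Metric.closedBall x t) := by
    intro t j
    rw [← hlaw j, Measure.map_apply (hX j) measurableSet_closedBall]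
  -- the binomial formula
  have hprob : ∀ t : ℝ, ℙ {ω | t < Y ω}
      = ∑ j ∈ range (i.1+1), (N.choose j : ENNReal) * (μ (Metric.closedBall x t)) ^ j
          * (1 - μ (Metric.closedBall x t)) ^ (N - j) := by
    intro t
    rw [hev t]
    exact nnd_count_prob N X hX hindep (Metric.closedBall x t) measurableSet_closedBall
      (μ (Metric.closedBall x t)) (hPlaw t) i.1
  have hiN : i.1 < N := i.isLt
  have hρD : ρ * D ^ d ≤ 1 := by
    have h1 := hmass x hx D hD le_rfl
    have h2 : μ (Metric.closedBall x D) ≤ 1 := prob_le_one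
    have := le_trans h1 h2
    exact ENNReal.ofReal_le_one.mp this
  -- pointwise bound via antitonicity
  have hbound : ∀ t : ℝ, 0 < t → t ≤ D →
      ℙ {ω | t < Y ω} ≤ ENNReal.ofReal (nndF N i.1 (ρ * t ^ d)) := by
    intro t ht0 htD
    rw [hprob t]
    set P : ENNReal := μ (Metric.closedBall x t) with hP
    have hP1 : P ≤ 1 := prob_le_one
    have hPtop : P ≠ ⊤ := (lt_of_le_of_lt hP1 ENNReal.one_lt_top).ne
    set p : ℝ := P.toReal with hp
    have hp0 : 0 ≤ p := ENNReal.toReal_nonneg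
    have hp1 : p ≤ 1 := by
      rw [hp]
      exact ENNReal.toReal_le_of_le_ofReal zero_le_one (by simpa using hP1)
    have hPofReal : P = ENNReal.ofReal p := (ENNReal.ofReal_toReal hPtop).symm
    have h1P : 1 - P = ENNReal.ofReal (1 - p) := by
      rw [hPofReal, ← ENNReal.ofReal_one, ← ENNReal.ofReal_sub _ hp0]
    have hsum : ∑ j ∈ range (i.1+1), (N.choose j : ENNReal) * P ^ j * (1 - P) ^ (N - j)
        = ENNReal.ofReal (nndF N i.1 p) := by
      rw [nndF, ENNReal.ofReal_sum_of_nonneg]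
      · apply Finset.sum_congr rfl
        intro j _
        rw [h1P, hPofReal, ← ENNReal.ofReal_pow hp0, ← ENNReal.ofReal_pow (by linarith),
          ← ENNReal.ofReal_natCast (N.choose j), ← ENNReal.ofReal_mul (by positivity),
          ← ENNReal.ofReal_mul (by positivity)]
      · intro j _
        have : (0:ℝ) ≤ 1 - p := by linarith
        positivity
    rw [hsum]
    apply ENNReal.ofReal_le_ofReal
    have hrt0 : 0 ≤ ρ * t ^ d := by positivity
    have hrt1 : ρ * t ^ d ≤ 1 := by
      have : ρ * t ^ d ≤ ρ * D ^ d := by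
        apply mul_le_mul_of_nonneg_left _ hρ.le
        exact pow_le_pow_left₀ ht0.le htD d
      linarith
    have hle : ρ * t ^ d ≤ p := by
      have h1 := hmass x hx t ht0 htD
      rw [← hP] at h1
      have := ENNReal.toReal_mono hPtop h1
      rwa [ENNReal.toReal_ofReal hrt0] at this
    exact nndF_antitoneOn hiN ⟨hrt0, hrt1⟩ ⟨hp0, hp1⟩ hle
  -- tail vanishing
  have hae : ∀ᵐ ω ∂(ℙ : Measure Ω), ∀ j, X j ω ∈ S := by
    rw [ae_all_iff]
    intro j
    have : ℙ (X j ⁻¹' Sᶜ) = 0 := by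
      rw [← hlaw j, Measure.map_apply (hX j) hSclosed.isOpen_compl.measurableSet] at hSfull
      exact hSfull
    filter_upwards [measure_eq_zero_iff_ae_notMem.mp this] with ω hω
    simpa using hω
  have hYleD : ∀ᵐ ω ∂(ℙ : Measure Ω), Y ω ≤ D := by
    filter_upwards [hae] with ω hω
    have h1 : X (Tuple.sort (fun j => ‖X j ω - x‖) i) ω ∈ S := hω _
    have := Metric.dist_le_diam_of_mem hSbdd h1 hx
    rw [hdiam] at this
    simpa [hY, dist_eq_norm] using this
  have htail : ∀ t : ℝ, D < t → ℙ {ω | t < Y ω} = 0 := by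
    intro t ht
    apply measure_mono_null _ (ae_iff.mp hYleD)
    intro ω hω
    simp only [Set.mem_setOf_eq] at hω ⊢
    push_neg
    linarith [hω]
  -- layer cake for Y^d
  have hFcont : Continuous (fun t : ℝ => nndF N i.1 (ρ * t ^ d)) :=
    (nndF_continuous N i.1).comp (continuous_const.mul (continuous_pow d))
  have hgcont : Continuous (fun t : ℝ => (d:ℝ) * t ^ (d-1)) :=
    continuous_const.mul (continuous_pow (d-1))
  have hlayer : ∫⁻ ω, ENNReal.ofReal ((Y ω) ^ d) ∂ℙ
      = ∫⁻ t in Set.Ioi 0, ℙ {ω | t < Y ω} * ENNReal.ofReal ((d:ℝ) * t ^ (d-1)) := by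
    have key := lintegral_comp_eq_lintegral_meas_lt_mul (ℙ : Measure Ω)
      (f := Y) (g := fun t => (d:ℝ) * t ^ (d-1))
      (Filter.Eventually.of_forall hYnn) hYmeas.aemeasurable
      (fun t _ => (hgcont.intervalIntegrable 0 t))
      (by
        filter_upwards [ae_restrict_mem measurableSet_Ioi] with t ht
        have ht' : (0:ℝ) < t := ht
        positivity)
    rw [← key]
    apply lintegral_congr
    intro ω
    congr 1
    rw [intervalIntegral.integral_const_mul, integral_pow]
    rw [Nat.sub_add_cancel hd, Nat.cast_sub hd]
    rw [zero_pow (by omega : d ≠ 0)]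
    have hd0 : (d:ℝ) ≠ 0 := by positivity
    push_cast
    field_simp
    rw [sub_add_cancel, sub_zero, mul_div_cancel_left₀ _ hd0]
  -- split the range and bound
  have hsplit : ∫⁻ t in Set.Ioi 0, ℙ {ω | t < Y ω} * ENNReal.ofReal ((d:ℝ) * t ^ (d-1))
      ≤ ENNReal.ofReal (∫ t in Set.Ioc 0 D, nndF N i.1 (ρ * t ^ d) * ((d:ℝ) * t ^ (d-1))) := by
    have hdecomp : (Set.Ioi (0:ℝ)) = Set.Ioc 0 D ∪ Set.Ioi D :=
      (Set.Ioc_union_Ioi_eq_Ioi hD.le).symm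
    rw [hdecomp, lintegral_union measurableSet_Ioi (Set.Ioc_disjoint_Ioi le_rfl)]
    have hzero : ∫⁻ t in Set.Ioi D, ℙ {ω | t < Y ω} * ENNReal.ofReal ((d:ℝ) * t ^ (d-1)) = 0 := by
      have heq : ∀ t ∈ Set.Ioi D, ℙ {ω | t < Y ω} * ENNReal.ofReal ((d:ℝ) * t ^ (d-1))
          = (fun _ : ℝ => (0:ENNReal)) t := by
        intro t ht
        simp only
        rw [htail t ht, zero_mul]
      rw [setLIntegral_congr_fun measurableSet_Ioi heq,
        lintegral_zero]
    rw [hzero, add_zero]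
    have hmono : ∫⁻ t in Set.Ioc 0 D, ℙ {ω | t < Y ω} * ENNReal.ofReal ((d:ℝ) * t ^ (d-1))
        ≤ ∫⁻ t in Set.Ioc 0 D, ENNReal.ofReal (nndF N i.1 (ρ * t ^ d) * ((d:ℝ) * t ^ (d-1))) := by
      apply setLIntegral_mono
      · exact (hFcont.mul hgcont).measurable.ennreal_ofReal
      · intro t ht
        have ht0 : 0 < t := ht.1
        have htD : t ≤ D := ht.2
        have hg0 : (0:ℝ) ≤ (d:ℝ) * t ^ (d-1) := by positivity
        rw [ENNReal.ofReal_mul (nndF_nonneg (by positivity) ?_)]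
        · exact mul_le_mul_left (hbound t ht0 htD) _
        · have : ρ * t ^ d ≤ ρ * D ^ d := by
            apply mul_le_mul_of_nonneg_left _ hρ.le
            exact pow_le_pow_left₀ ht0.le htD d
          linarith
    apply le_trans hmono
    rw [← ofReal_integral_eq_lintegral_ofReal]
    · exact (hFcont.mul hgcont).integrableOn_Ioc
    · filter_upwards [ae_restrict_mem measurableSet_Ioc] with t ht
      have ht0 : (0:ℝ) < t := ht.1
      have hF0 : 0 ≤ nndF N i.1 (ρ * t ^ d) := by
        apply nndF_nonneg (by positivity)
        have : ρ * t ^ d ≤ ρ * D ^ d := by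
          apply mul_le_mul_of_nonneg_left _ hρ.le
          exact pow_le_pow_left₀ ht0.le ht.2 d
        linarith
      positivity
  -- the real integral computation via substitution
  have hreal : ∫ t in Set.Ioc 0 D, nndF N i.1 (ρ * t ^ d) * ((d:ℝ) * t ^ (d-1)) ≤ M := by
    rw [← intervalIntegral.integral_of_le hD.le]
    have hsub : ∫ t in (0:ℝ)..D, (ρ * ((d:ℝ) * t ^ (d-1))) • (nndF N i.1 ∘ fun s => ρ * s ^ d) t
        = ∫ u in (ρ * 0 ^ d)..(ρ * D ^ d), nndF N i.1 u := by
      apply intervalIntegral.integral_comp_smul_deriv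
        (f := fun t => ρ * t ^ d) (f' := fun t => ρ * ((d:ℝ) * t ^ (d-1)))
      · intro t _
        exact (hasDerivAt_pow d t).const_mul ρ
      · exact (continuous_const.mul hgcont).continuousOn
      · exact nndF_continuous N i.1
    simp only [Function.comp_apply] at hsub
    have hzp : ρ * (0:ℝ) ^ d = 0 := by
      rw [zero_pow (by omega : d ≠ 0), mul_zero]
    rw [hzp] at hsub
    have hrw : ∫ t in (0:ℝ)..D, nndF N i.1 (ρ * t ^ d) * ((d:ℝ) * t ^ (d-1))
        = (1/ρ) * ∫ u in (0:ℝ)..(ρ * D ^ d), nndF N i.1 u := by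
      rw [← hsub, ← intervalIntegral.integral_const_mul]
      apply intervalIntegral.integral_congr
      intro t _
      simp only [smul_eq_mul]
      field_simp
    rw [hrw]
    have hmono2 : ∫ u in (0:ℝ)..(ρ * D ^ d), nndF N i.1 u ≤ ∫ u in (0:ℝ)..1, nndF N i.1 u := by
      apply intervalIntegral.integral_mono_interval le_rfl (by positivity) hρD
      · filter_upwards [ae_restrict_mem measurableSet_Ioc] with u hu
        exact nndF_nonneg hu.1.le hu.2
      · exact (nndF_continuous N i.1).intervalIntegrable 0 1
    rw [nndF_integral hiN] at hmono2
    have h3 : (1/ρ) * ∫ u in (0:ℝ)..(ρ * D ^ d), nndF N i.1 u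
        ≤ (1/ρ) * (((i.1:ℝ)+1)/((N:ℝ)+1)) := by
      apply mul_le_mul_of_nonneg_left hmono2 (by positivity)
    apply le_trans h3
    apply le_of_eq
    rw [hM]
    field_simp
  have hEd : ∫⁻ ω, ENNReal.ofReal ((Y ω) ^ d) ∂ℙ ≤ ENNReal.ofReal M := by
    rw [hlayer]
    exact le_trans hsplit (ENNReal.ofReal_le_ofReal hreal)
  -- Lp monotonicity on a probability space
  have he1 : eLpNorm Y 1 ℙ = ∫⁻ ω, ENNReal.ofReal (Y ω) ∂ℙ := by
    rw [eLpNorm_one_eq_lintegral_enorm]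
    apply lintegral_congr
    intro ω
    exact Real.enorm_eq_ofReal (hYnn ω)
  have hdne : ((d:ℕ) : ENNReal) ≠ 0 := by
    exact_mod_cast (by omega : d ≠ 0)
  have hed : eLpNorm Y (d : ENNReal) ℙ
      = (∫⁻ ω, ENNReal.ofReal ((Y ω) ^ d) ∂ℙ) ^ ((1:ℝ)/(d:ℝ)) := by
    rw [eLpNorm_eq_lintegral_rpow_enorm_toReal hdne (ENNReal.natCast_ne_top d)]
    rw [ENNReal.toReal_natCast]
    congr 1
    apply lintegral_congr
    intro ω
    rw [Real.enorm_eq_ofReal (hYnn ω), ← Real.rpow_natCast (Y ω) d,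
      ENNReal.ofReal_rpow_of_nonneg (hYnn ω) (by positivity)]
  have hle1d : eLpNorm Y 1 ℙ ≤ eLpNorm Y (d : ENNReal) ℙ :=
    eLpNorm_le_eLpNorm_of_exponent_le (by exact_mod_cast hd) hYmeas.aestronglyMeasurable
  have hchain : ∫⁻ ω, ENNReal.ofReal (Y ω) ∂ℙ ≤ (ENNReal.ofReal M) ^ ((1:ℝ)/(d:ℝ)) := by
    rw [← he1]
    apply le_trans hle1d
    rw [hed]
    exact ENNReal.rpow_le_rpow hEd (by positivity)
  have hint : ∫ ω, Y ω ∂ℙ = (∫⁻ ω, ENNReal.ofReal (Y ω) ∂ℙ).toReal :=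
    integral_eq_lintegral_of_nonneg_ae (Filter.Eventually.of_forall hYnn)
      hYmeas.aestronglyMeasurable
  have hfin : (ENNReal.ofReal M) ^ ((1:ℝ)/(d:ℝ)) ≠ ⊤ :=
    ENNReal.rpow_ne_top_of_nonneg (by positivity) ENNReal.ofReal_ne_top
  have hfinal : ∫ ω, Y ω ∂ℙ ≤ M ^ ((1:ℝ)/(d:ℝ)) := by
    rw [hint]
    have := ENNReal.toReal_mono hfin hchain
    apply le_trans this
    rw [← ENNReal.toReal_rpow, ENNReal.toReal_ofReal hMpos.le]
  apply le_trans hfinal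
  have : (0:ℝ) ≤ M ^ ((1:ℝ)/(d:ℝ)) := Real.rpow_nonneg hMpos.le _
  linarith

end Main
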